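/- Let U and I be nonempty finite sets, Δ : U × I → ℝ with Δ_{ui} ≠ 0 for all (u,i), w : U × I → ℝ with w_{ui} > 0 for all (u,i), β ∈ ℝ and γ > 0. Then there exists a constant c ∈ ℝ (depending only on Δ, w, β, γ, |U|, |I|) such that for every function s : U × I → ℝ, the weighted loss L_w(s) = Σ_{u∈U} Σ_{i∈I} w_{ui}·(Δ_{ui}²/exp(s_{ui}) + β·s_{ui} + γ·s_{ui}²) satisfies L_w(s) ≥ Σ_{u∈U} KL(p̃_u || q_u^s) + c, where p̃_u(i) = w_{ui}·Δ_{ui}²/K̃_u with K̃_u = Σ_{j∈I} w_{uj}·Δ_{uj}², q_u^s(i) = exp(s_{ui})/R_u(s) with R_u(s) = Σ_{j∈I} exp(s_{uj}), and KL(p̃_u || q_u^s) = Σ_{i∈I} p̃_u(i)·ln(p̃_u(i)/q_u^s(i)). -/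
import Mathlib

private lemma key_ineq (a b c x : ℝ) (ha : 0 ≤ a) (hc : 0 < c) :
    a * Real.exp (-x) + b * x + c * x ^ 2 - |x| ≥ -((|b| + 1) ^ 2 / (4 * c)) := by
  have h1 : 0 ≤ a * Real.exp (-x) := mul_nonneg ha (Real.exp_pos _).le
  have h2 : b * x ≥ -(|b| * |x|) := by
    have := neg_abs_le (b * x); rw [abs_mul] at this; linarith
  rw [ge_iff_le, neg_le, le_div_iff₀ (by positivity : (0:ℝ) < 4 * c)]
  have h2c : c * (-(|b| * |x|)) ≤ c * (b * x) := mul_le_mul_of_nonneg_left h2 hc.le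
  have hx2 : c ^ 2 * |x| ^ 2 = c ^ 2 * x ^ 2 := by rw [sq_abs]
  nlinarith [sq_nonneg (2 * c * |x| - (|b| + 1)), hx2, mul_nonneg h1 hc.le, h2c]

private lemma log_sum_exp_le {I : Type*} [Fintype I] [Nonempty I] (s : I → ℝ) :
    Real.log (∑ j : I, Real.exp (s j)) ≤
      Real.log (Fintype.card I : ℝ) + ∑ j : I, |s j| := by
  have hpos : (0:ℝ) < ∑ j : I, Real.exp (s j) :=
    Finset.sum_pos (fun j _ => Real.exp_pos _) Finset.univ_nonempty
  have hb : ∀ j : I, Real.exp (s j) ≤ Real.exp (∑ k : I, |s k|) := by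
    intro j
    apply Real.exp_le_exp.2
    calc s j ≤ |s j| := le_abs_self _
      _ ≤ ∑ k : I, |s k| :=
        Finset.single_le_sum (f := fun k : I => |s k|)
          (fun k _ => abs_nonneg _) (Finset.mem_univ j)
  have hle : (∑ j : I, Real.exp (s j)) ≤
      (Fintype.card I : ℝ) * Real.exp (∑ k : I, |s k|) := by
    calc (∑ j : I, Real.exp (s j)) ≤ ∑ _j : I, Real.exp (∑ k : I, |s k|) :=
          Finset.sum_le_sum (fun j _ => hb j)
      _ = (Fintype.card I : ℝ) * Real.exp (∑ k : I, |s k|) := by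
          rw [Finset.sum_const, nsmul_eq_mul]; rfl
  calc Real.log (∑ j : I, Real.exp (s j))
      ≤ Real.log ((Fintype.card I : ℝ) * Real.exp (∑ k : I, |s k|)) :=
        Real.log_le_log hpos hle
    _ = Real.log (Fintype.card I : ℝ) + ∑ k : I, |s k| := by
        rw [Real.log_mul (by positivity) (Real.exp_pos _).ne', Real.log_exp]

/-- The weighted generalization of Theorem 1 of the paper. -/
theorem stmt_6 {U I : Type*} [Fintype U] [Fintype I] [Nonempty U] [Nonempty I]
    (Δ : U → I → ℝ) (hΔ : ∀ u i, Δ u i ≠ 0)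
    (w : U → I → ℝ) (hw : ∀ u i, 0 < w u i) (β γ : ℝ) (hγ : 0 < γ) :
    ∃ c : ℝ, ∀ s : U → I → ℝ,
      (∑ u : U, ∑ i : I,
          w u i * ((Δ u i) ^ 2 / Real.exp (s u i) + β * s u i + γ * (s u i) ^ 2)) ≥
        (∑ u : U, ∑ i : I,
            (w u i * (Δ u i) ^ 2 / (∑ j : I, w u j * (Δ u j) ^ 2)) *
              Real.log ((w u i * (Δ u i) ^ 2 / (∑ j : I, w u j * (Δ u j) ^ 2)) /
                (Real.exp (s u i) / (∑ j : I, Real.exp (s u j))))) + c := by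
  classical
  have hΔsq : ∀ u i, (0:ℝ) < Δ u i ^ 2 := fun u i => by
    have := hΔ u i; positivity
  have hK : ∀ u : U, 0 < ∑ j : I, w u j * Δ u j ^ 2 := fun u =>
    Finset.sum_pos (fun j _ => mul_pos (hw u j) (hΔsq u j)) Finset.univ_nonempty
  set p : U → I → ℝ := fun u i => w u i * Δ u i ^ 2 / (∑ j : I, w u j * Δ u j ^ 2) with hp
  have hppos : ∀ u i, 0 < p u i := fun u i =>
    div_pos (mul_pos (hw u i) (hΔsq u i)) (hK u)
  have hpsum : ∀ u, ∑ i : I, p u i = 1 := by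
    intro u
    simp only [hp]
    rw [← Finset.sum_div, div_self (hK u).ne']
  refine ⟨∑ u : U, ((∑ i : I, (-((|w u i * β + p u i| + 1) ^ 2 / (4 * (w u i * γ)))
      - p u i * Real.log (p u i))) - Real.log (Fintype.card I : ℝ)), ?_⟩
  intro s
  rw [ge_iff_le, ← Finset.sum_add_distrib]
  apply Finset.sum_le_sum
  intro u _
  set R : ℝ := ∑ j : I, Real.exp (s u j) with hR
  have hRpos : 0 < R := Finset.sum_pos (fun j _ => Real.exp_pos _) Finset.univ_nonempty
  have hKL : (∑ i : I, p u i * Real.log (p u i / (Real.exp (s u i) / R)))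
      = (∑ i : I, (p u i * Real.log (p u i) - p u i * s u i)) + Real.log R := by
    have : ∀ i : I, p u i * Real.log (p u i / (Real.exp (s u i) / R))
        = (p u i * Real.log (p u i) - p u i * s u i) + p u i * Real.log R := by
      intro i
      rw [Real.log_div (hppos u i).ne' (div_pos (Real.exp_pos _) hRpos).ne',
        Real.log_div (Real.exp_pos _).ne' hRpos.ne', Real.log_exp]
      ring
    rw [Finset.sum_congr rfl (fun i _ => this i), Finset.sum_add_distrib,
      ← Finset.sum_mul, hpsum u, one_mul]
  have hlog : Real.log R ≤ Real.log (Fintype.card I : ℝ) + ∑ j : I, |s u j| :=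
    log_sum_exp_le (s u)
  have hterm : ∀ i : I,
      -((|w u i * β + p u i| + 1) ^ 2 / (4 * (w u i * γ))) - p u i * s u i + |s u i|
        ≤ w u i * ((Δ u i) ^ 2 / Real.exp (s u i) + β * s u i + γ * (s u i) ^ 2) := by
    intro i
    have h := key_ineq (w u i * (Δ u i) ^ 2) (w u i * β + p u i) (w u i * γ) (s u i)
      (mul_nonneg (hw u i).le (sq_nonneg _)) (mul_pos (hw u i) hγ)
    have he : (Δ u i) ^ 2 / Real.exp (s u i) = (Δ u i) ^ 2 * Real.exp (-(s u i)) := by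
      rw [Real.exp_neg]; ring
    rw [he]
    nlinarith [h]
  have hcomb : (∑ i : I, (p u i * Real.log (p u i) - p u i * s u i))
      + (∑ i : I, (-((|w u i * β + p u i| + 1) ^ 2 / (4 * (w u i * γ)))
          - p u i * Real.log (p u i)))
      = ∑ i : I, (-((|w u i * β + p u i| + 1) ^ 2 / (4 * (w u i * γ))) - p u i * s u i) := by
    rw [← Finset.sum_add_distrib]
    exact Finset.sum_congr rfl (fun i _ => by ring)
  calc (∑ i : I, p u i * Real.log (p u i / (Real.exp (s u i) / R)))
        + ((∑ i : I, (-((|w u i * β + p u i| + 1) ^ 2 / (4 * (w u i * γ)))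
            - p u i * Real.log (p u i))) - Real.log (Fintype.card I : ℝ))
      = (∑ i : I, (-((|w u i * β + p u i| + 1) ^ 2 / (4 * (w u i * γ)))
          - p u i * s u i)) + Real.log R - Real.log (Fintype.card I : ℝ) := by
        rw [hKL]; linarith [hcomb]
    _ ≤ (∑ i : I, (-((|w u i * β + p u i| + 1) ^ 2 / (4 * (w u i * γ)))
          - p u i * s u i + |s u i|)) := by
        rw [Finset.sum_add_distrib]
        linarith [hlog]
    _ ≤ ∑ i : I, w u i * ((Δ u i) ^ 2 / Real.exp (s u i) + β * s u i + γ * (s u i) ^ 2) :=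
        Finset.sum_le_sum (fun i _ => hterm i)
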